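/- A vector field X on M takes values in a distribution D ⊆ TM (smooth, of locally constant rank) if and only if its vertical lift X^V is tangent to D regarded as a submanifold of TM. -/

import Mathlib

open Bundle
open scoped Manifold
open Filter Topology

noncomputable section

variable {E : Type*} [NormedAddCommGroup E] [NormedSpace ℝ E]
  {H : Type*} [TopologicalSpace H] {I : ModelWithCorners ℝ E H}
  {M : Type*} [TopologicalSpace M] [ChartedSpace H M] [IsManifold I (⊤ : ℕ∞) M]

/-- The vertical lift `X^V(p) = d/dt|₀ (p + t X(x))` of a vector field `X`, as a vector
field on `TM`. -/
def vertLift (X : (x : M) → TangentSpace I x) :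
    (p : TangentBundle I M) → TangentSpace I.tangent p := fun p =>
  mfderiv 𝓘(ℝ) I.tangent
    (fun t : ℝ => (⟨p.proj, p.2 + t • X p.proj⟩ : TangentBundle I M)) 0 (1 : ℝ)


private theorem span_limit {E : Type*} [NormedAddCommGroup E] [NormedSpace ℝ E] {n : ℕ}
    {ζ : Fin n → ℝ → E} (hζ : ∀ i, ContinuousAt (ζ i) 0)
    (hind : LinearIndependent ℝ (fun i => ζ i 0))
    {w : ℝ → E} {w' : E} (hw : HasDerivAt w w' 0) (hw0 : w 0 = 0)
    (hmem : ∀ᶠ t in 𝓝 (0:ℝ), w t ∈ Submodule.span ℝ (Set.range (fun i => ζ i t))) :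
    w' ∈ Submodule.span ℝ (Set.range (fun i => ζ i 0)) := by
  classical
  set S₀ := Submodule.span ℝ (Set.range (fun i => ζ i 0)) with hS₀
  haveI : FiniteDimensional ℝ S₀ := FiniteDimensional.span_of_finite ℝ (Set.finite_range _)
  -- dual family
  obtain ⟨f, hf⟩ : ∃ f : Fin n → (E →L[ℝ] ℝ), ∀ j i, f j (ζ i 0) = if i = j then 1 else 0 := by
    let b : Module.Basis (Fin n) ℝ S₀ := Module.Basis.span hind
    have hcont : ∀ j : Fin n, ∃ g : E →L[ℝ] ℝ, ∀ y : S₀, g y = b.coord j y := by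
      intro j
      obtain ⟨g, hg, -⟩ := exists_extension_norm_eq (S₀ : Subspace ℝ E)
        (LinearMap.toContinuousLinearMap (b.coord j))
      exact ⟨g, fun y => hg y⟩
    choose f hfx using hcont
    refine ⟨f, fun j i => ?_⟩
    have hmemi : ζ i 0 ∈ S₀ := Submodule.subset_span ⟨i, rfl⟩
    have h1 := hfx j ⟨ζ i 0, hmemi⟩
    have h2 : (⟨ζ i 0, hmemi⟩ : S₀) = b i := (Module.Basis.span_apply hind i).symm
    rw [h2] at h1
    rw [show f j (ζ i 0) = f j ((b i : S₀) : E) by rw [← h2], h1, Module.Basis.coord_apply,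
      b.repr_self, Finsupp.single_apply]
  -- coefficients
  let bb : ℝ → Fin n → ℝ := fun t =>
    if h : ∃ a : Fin n → ℝ, ∑ i, a i • ζ i t = w t then h.choose else 0
  have hbb : ∀ᶠ t in 𝓝 (0:ℝ), ∑ i, bb t i • ζ i t = w t := by
    filter_upwards [hmem] with t ht
    have ht' : ∃ a : Fin n → ℝ, ∑ i, a i • ζ i t = w t :=
      (Submodule.mem_span_range_iff_exists_fun ℝ).mp ht
    simp only [bb, dif_pos ht']
    exact ht'.choose_spec
  -- smallness of the frame perturbation
  have hsmall : ∀ᶠ t in 𝓝 (0:ℝ), ∀ j i : Fin n,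
      |f j (ζ i t) - (if i = j then 1 else 0)| ≤ 1/(2*((n:ℝ)+1)) := by
    rw [eventually_all]; intro j
    rw [eventually_all]; intro i
    have hc : ContinuousAt (fun t => f j (ζ i t)) 0 :=
      ((f j).continuous.continuousAt).comp (hζ i)
    have := Metric.tendsto_nhds.mp hc.tendsto (1/(2*((n:ℝ)+1))) (by positivity)
    filter_upwards [this] with t ht
    rw [Real.dist_eq, hf j i] at ht
    exact ht.le
  -- the coefficient bound
  have hB : ∀ᶠ t in 𝓝 (0:ℝ), ∑ j, |bb t j| ≤ 2 * ∑ j, |f j (w t)| := by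
    filter_upwards [hbb, hsmall] with t ht hs
    have key : ∀ j, bb t j
        = f j (w t) - ∑ i, bb t i * (f j (ζ i t) - (if i = j then 1 else 0)) := by
      intro j
      have h1 : f j (w t) = ∑ i, bb t i * f j (ζ i t) := by
        rw [← ht, map_sum]
        exact Finset.sum_congr rfl fun i _ => by rw [map_smul, smul_eq_mul]
      rw [h1, ← Finset.sum_sub_distrib]
      have h3 : ∀ i : Fin n, bb t i * f j (ζ i t)
          - bb t i * (f j (ζ i t) - (if i = j then 1 else 0))
          = if i = j then bb t i else 0 := by
        intro i
        by_cases h : i = j <;> simp [h] <;> ring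
      rw [Finset.sum_congr rfl fun i _ => h3 i, Finset.sum_ite_eq' Finset.univ j (bb t),
        if_pos (Finset.mem_univ j)]
    have habs : ∀ j, |bb t j| ≤ |f j (w t)| + (∑ i, |bb t i|) * (1/(2*((n:ℝ)+1))) := by
      intro j
      rw [key j, sub_eq_add_neg]
      refine (abs_add_le _ _).trans ?_
      rw [abs_neg]
      refine add_le_add le_rfl ?_
      refine (Finset.abs_sum_le_sum_abs _ _).trans ?_
      rw [Finset.sum_mul]
      refine Finset.sum_le_sum fun i _ => ?_
      rw [abs_mul]
      exact mul_le_mul_of_nonneg_left (hs j i) (abs_nonneg _)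
    have hBnn : (0:ℝ) ≤ ∑ j, |bb t j| := Finset.sum_nonneg fun j _ => abs_nonneg _
    have hnε : (n:ℝ) * (1/(2*((n:ℝ)+1))) ≤ 1/2 := by
      rw [mul_one_div, div_le_div_iff₀ (by positivity) (by norm_num)]
      push_cast; linarith
    have hsum : ∑ j, |bb t j|
        ≤ (∑ j, |f j (w t)|) + (n:ℝ) * ((∑ i, |bb t i|) * (1/(2*((n:ℝ)+1)))) := by
      calc ∑ j, |bb t j|
          ≤ ∑ j : Fin n, (|f j (w t)| + (∑ i, |bb t i|) * (1/(2*((n:ℝ)+1)))) :=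
            Finset.sum_le_sum fun j _ => habs j
        _ = (∑ j, |f j (w t)|) + (n:ℝ) * ((∑ i, |bb t i|) * (1/(2*((n:ℝ)+1)))) := by
            rw [Finset.sum_add_distrib, Finset.sum_const, Finset.card_univ, Fintype.card_fin,
              nsmul_eq_mul]
    have h4 : (n:ℝ) * ((∑ i, |bb t i|) * (1/(2*((n:ℝ)+1))))
        ≤ (1/2) * ∑ i, |bb t i| := by
      rw [show (n:ℝ) * ((∑ i, |bb t i|) * (1/(2*((n:ℝ)+1))))
          = ((n:ℝ) * (1/(2*((n:ℝ)+1)))) * ∑ i, |bb t i| by ring]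
      exact mul_le_mul_of_nonneg_right hnε hBnn
    linarith
  -- the limit of the approximating combinations
  have htq : Tendsto (fun t => ∑ i, (t⁻¹ * bb t i) • ζ i 0) (𝓝[≠] (0:ℝ)) (𝓝 w') := by
    have hslope : Tendsto (fun t : ℝ => t⁻¹ • w t) (𝓝[≠] (0:ℝ)) (𝓝 w') := by
        refine (hasDerivAt_iff_tendsto_slope.mp hw).congr fun t => ?_
        rw [slope_def_module]; simp [hw0]
    set q : ℝ → E := fun t => ∑ i, (t⁻¹ * bb t i) • ζ i 0 with hq
    have hdiff : Tendsto (fun t => dist (t⁻¹ • w t) (q t)) (𝓝[≠] (0:ℝ)) (𝓝 0) := by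
      apply squeeze_zero' (g := fun t => (2 * ∑ j, |f j (t⁻¹ • w t)|) * ∑ i, ‖ζ i t - ζ i 0‖)
        (Eventually.of_forall fun t => dist_nonneg)
      · filter_upwards [hbb.filter_mono nhdsWithin_le_nhds, hB.filter_mono nhdsWithin_le_nhds]
          with t ht hBt
        have h1 : t⁻¹ • w t - q t = ∑ i, (t⁻¹ * bb t i) • (ζ i t - ζ i 0) := by
          rw [← ht, Finset.smul_sum, ← Finset.sum_sub_distrib]
          congr 1; funext i; rw [smul_smul, smul_sub]
        rw [dist_eq_norm, h1]
        calc ‖∑ i, (t⁻¹ * bb t i) • (ζ i t - ζ i 0)‖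
            ≤ ∑ i, |t⁻¹ * bb t i| * ‖ζ i t - ζ i 0‖ := by
              refine (norm_sum_le _ _).trans (le_of_eq ?_)
              congr 1; funext i; rw [norm_smul, Real.norm_eq_abs]
          _ ≤ ∑ i, |t⁻¹ * bb t i| * (∑ k, ‖ζ k t - ζ k 0‖) := by
              refine Finset.sum_le_sum fun i _ => ?_
              exact mul_le_mul_of_nonneg_left
                (Finset.single_le_sum (f := fun k => ‖ζ k t - ζ k 0‖)
                  (fun k _ => norm_nonneg _) (Finset.mem_univ i))
                (abs_nonneg _)
          _ = (∑ i, |t⁻¹ * bb t i|) * ∑ k, ‖ζ k t - ζ k 0‖ := by rw [Finset.sum_mul]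
          _ ≤ (2 * ∑ j, |f j (t⁻¹ • w t)|) * ∑ k, ‖ζ k t - ζ k 0‖ := by
              refine mul_le_mul_of_nonneg_right ?_
                (Finset.sum_nonneg fun k _ => norm_nonneg _)
              have h2 : ∀ j, |f j (t⁻¹ • w t)| = |t⁻¹| * |f j (w t)| := by
                intro j; rw [map_smul, smul_eq_mul, abs_mul]
              calc ∑ i, |t⁻¹ * bb t i| = |t⁻¹| * ∑ i, |bb t i| := by
                    rw [Finset.mul_sum]; congr 1; funext i; rw [abs_mul]
                _ ≤ |t⁻¹| * (2 * ∑ j, |f j (w t)|) :=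
                    mul_le_mul_of_nonneg_left hBt (abs_nonneg _)
                _ = 2 * ∑ j, |f j (t⁻¹ • w t)| := by
                    simp_rw [h2, Finset.mul_sum]
                    exact Finset.sum_congr rfl fun i _ => by ring
      · have hg1 : Tendsto (fun t : ℝ => 2 * ∑ j, |f j (t⁻¹ • w t)|) (𝓝[≠] (0:ℝ))
            (𝓝 (2 * ∑ j, |f j w'|)) := by
          have hcont : Continuous fun z : E => 2 * ∑ j, |f j z| :=
            continuous_const.mul (continuous_finset_sum _ fun j _ => (f j).continuous.abs)
          exact (hcont.tendsto w').comp hslope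
        have hg2 : Tendsto (fun t : ℝ => ∑ i, ‖ζ i t - ζ i 0‖) (𝓝[≠] (0:ℝ)) (𝓝 0) := by
          have : Tendsto (fun t : ℝ => ∑ i, ‖ζ i t - ζ i 0‖) (𝓝 (0:ℝ))
              (𝓝 (∑ i : Fin n, ‖ζ i 0 - ζ i 0‖)) :=
            tendsto_finset_sum _ fun i _ => ((hζ i).sub tendsto_const_nhds).norm
          simpa using this.mono_left nhdsWithin_le_nhds
        simpa using hg1.mul hg2
    exact hslope.congr_dist hdiff
  
  have hqmem : ∀ t : ℝ, (∑ i, (t⁻¹ * bb t i) • ζ i 0) ∈ S₀ := fun t =>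
    Submodule.sum_mem _ fun i _ => Submodule.smul_mem _ _ (Submodule.subset_span ⟨i, rfl⟩)
  have hclosed : IsClosed (S₀ : Set E) := Submodule.closed_of_finiteDimensional S₀
  have hcl : w' ∈ closure (S₀ : Set E) :=
    mem_closure_of_tendsto htq (Eventually.of_forall hqmem)
  rwa [hclosed.closure_eq] at hcl

/-- Second coordinate of the extended chart of the tangent bundle. -/
private theorem extChartAt_tangent_snd (p q : TangentBundle I M) :
    (extChartAt I.tangent p q).2 = (trivializationAt E (TangentSpace I) p.proj q).2 := by
  rw [FiberBundle.extChartAt]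
  rfl

/-- Derivative of a vertical line in the tangent bundle. -/
private theorem vertAux (x : M) (v Y : TangentSpace I x) :
    HasMFDerivAt 𝓘(ℝ) I.tangent
      (fun t : ℝ => (⟨x, v + t • Y⟩ : TangentBundle I M)) 0
      (ContinuousLinearMap.smulRight (1 : ℝ →L[ℝ] ℝ)
        (show E × E from ((0 : E), (trivializationAt E (TangentSpace I) x ⟨x, Y⟩).2))) := by
  set e := trivializationAt E (TangentSpace I) x with he
  have hxe : x ∈ e.baseSet := FiberBundle.mem_baseSet_trivializationAt' x
  constructor
  · exact ((FiberBundle.continuous_totalSpaceMk E (TangentSpace I) x).comp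
      (continuous_const.add (continuous_id.smul continuous_const))).continuousAt
  · have hfun : ∀ t : ℝ,
        (writtenInExtChartAt 𝓘(ℝ) I.tangent 0
            (fun t : ℝ => (⟨x, v + t • Y⟩ : TangentBundle I M))) t
          = (extChartAt I x x, (e ⟨x, v⟩).2 + t • (e ⟨x, Y⟩).2) := by
      intro t
      have hlin := e.linear ℝ hxe
      simp only [writtenInExtChartAt, Function.comp, extChartAt_model_space_eq_id,
        PartialEquiv.refl_symm, PartialEquiv.refl_coe, id]
      rw [FiberBundle.extChartAt]
      simp only [PartialEquiv.coe_trans, PartialEquiv.prod_coe, PartialEquiv.refl_coe,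
        Function.comp]
      have h1 : (e (⟨x, v + t • Y⟩ : TangentBundle I M)).1 = x :=
        e.coe_fst (e.mem_source.mpr hxe)
      have h2 : (e (⟨x, v + t • Y⟩ : TangentBundle I M)).2
          = (e ⟨x, v⟩).2 + t • (e ⟨x, Y⟩).2 := by
        have := hlin.map_add v (t • Y)
        have h3 := hlin.map_smul t Y
        rw [show (⟨x, v + t • Y⟩ : TangentBundle I M) = ⟨x, v + t • Y⟩ from rfl]
        rw [this, h3]
      simp [h1, h2]; exact h2
    rw [show Set.range 𝓘(ℝ, ℝ) = Set.univ from by simp]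
    apply HasFDerivAt.hasFDerivWithinAt
    have hder : HasDerivAt (fun t : ℝ =>
        ((extChartAt I x x : E), (e ⟨x, v⟩).2 + t • (e ⟨x, Y⟩).2))
        (show E × E from ((0 : E), (e ⟨x, Y⟩).2)) 0 := by
      refine (hasDerivAt_const _ _).prodMk ?_
      simpa using (((hasDerivAt_id (0:ℝ)).smul_const ((e ⟨x, Y⟩).2 : E)).const_add
        ((e ⟨x, v⟩).2 : E))
    have := hder.hasFDerivAt
    rw [show ((extChartAt 𝓘(ℝ, ℝ) (0:ℝ)) 0) = 0 from by simp [chartAt_self_eq]]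
    exact this.congr_of_eventuallyEq (Filter.Eventually.of_forall fun t => (hfun t))

/-- The chart representation of a differentiable curve into the tangent bundle has the
manifold derivative as ordinary derivative. -/
private theorem curve_hasDerivAt {c : ℝ → TangentBundle I M}
    (h : MDifferentiableAt 𝓘(ℝ) I.tangent c 0) :
    HasDerivAt (fun t => extChartAt I.tangent (c 0) (c t))
      (show E × E from mfderiv 𝓘(ℝ) I.tangent c 0 (1:ℝ)) 0 := by
  have h2 := h.differentiableWithinAt_writtenInExtChartAt
  rw [show Set.range 𝓘(ℝ, ℝ) = Set.univ from by simp, differentiableWithinAt_univ,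
    show ((extChartAt 𝓘(ℝ, ℝ) (0:ℝ)) 0) = 0 from by simp [chartAt_self_eq]] at h2
  have hm : (mfderiv 𝓘(ℝ) I.tangent c 0 : ℝ →L[ℝ] E × E)
      = fderiv ℝ (writtenInExtChartAt 𝓘(ℝ) I.tangent 0 c) 0 := by
    simp only [mfderiv, h, ↓reduceIte]
    rw [show Set.range 𝓘(ℝ, ℝ) = Set.univ from by simp,
      show ((extChartAt 𝓘(ℝ, ℝ) (0:ℝ)) 0) = 0 from by simp [chartAt_self_eq], fderivWithin_univ]
  have hm1 : (show E × E from mfderiv 𝓘(ℝ) I.tangent c 0 (1:ℝ))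
      = fderiv ℝ (writtenInExtChartAt 𝓘(ℝ) I.tangent 0 c) 0 1 := by rw [hm]; rfl
  rw [hm1]
  have hder := h2.hasFDerivAt.hasDerivAt
  refine hder.congr_of_eventuallyEq (Filter.Eventually.of_forall fun t => ?_)
  simp [writtenInExtChartAt, extChartAt_model_space_eq_id, chartAt_self_eq]

/-- a vector field `X` on `M` takes values in a smooth locally constant rank
distribution `D ⊆ TM` if and only if its vertical lift `X^V` is tangent to `D`, regarded as
a submanifold of `TM` (tangency expressed through curves lying in `D`). -/
theorem valued_in_distribution_iff_vlift_tangent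
    (D : (x : M) → Submodule ℝ (TangentSpace I x))
    -- `D` is smooth of locally constant rank: around every point it is spanned by finitely
    -- many smooth, pointwise linearly independent vector fields:
    (hD : ∀ x₀ : M, ∃ (n : ℕ) (Z : Fin n → (x : M) → TangentSpace I x) (U : Set M),
      U ∈ nhds x₀ ∧
      (∀ i, ContMDiff I I.tangent (⊤ : ℕ∞) (fun x => (⟨x, Z i x⟩ : TangentBundle I M))) ∧
      ∀ x ∈ U, LinearIndependent ℝ (fun i => Z i x) ∧
        D x = Submodule.span ℝ (Set.range fun i => Z i x))
    (X : (x : M) → TangentSpace I x)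
    (hX : ContMDiff I I.tangent (⊤ : ℕ∞) (fun x => (⟨x, X x⟩ : TangentBundle I M))) :
    (∀ x : M, X x ∈ D x) ↔
      (∀ p : TangentBundle I M, p.2 ∈ D p.proj →
        -- `X^V(p)` is tangent at `p` to the submanifold `D ⊆ TM`:
        ∃ c : ℝ → TangentBundle I M,
          (∀ t, (c t).2 ∈ D (c t).proj) ∧ c 0 = p ∧
          MDifferentiableAt 𝓘(ℝ) I.tangent c 0 ∧
          (show E × E from mfderiv 𝓘(ℝ) I.tangent c 0 (1 : ℝ)) =
            show E × E from vertLift X p) := by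
  classical
  constructor
  · -- Forward direction
    intro hXD p hp
    refine ⟨fun t : ℝ => ⟨p.proj, p.2 + t • X p.proj⟩, ?_, ?_, ?_, rfl⟩
    · intro t
      exact (D p.proj).add_mem hp ((D p.proj).smul_mem t (hXD p.proj))
    · show (⟨p.proj, p.2 + (0:ℝ) • X p.proj⟩ : TangentBundle I M) = p
      rw [zero_smul, add_zero]
    · exact (vertAux p.proj p.2 (X p.proj)).mdifferentiableAt
  · -- Backward direction
    intro hT x
    obtain ⟨n, Z, U, hU, hZsm, hZ⟩ := hD x
    obtain ⟨hxind, hxspan⟩ := hZ x (mem_of_mem_nhds hU)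
    obtain ⟨c, hcD, hc0, hcd, hceq⟩ := hT ⟨x, 0⟩ ((D x).zero_mem)
    set e := trivializationAt E (TangentSpace I) x with he
    have hxe : x ∈ e.baseSet := FiberBundle.mem_baseSet_trivializationAt' x
    set γ : ℝ → M := fun t => (c t).proj with hγ
    have hγ0 : γ 0 = x := by simp only [hγ]; rw [hc0]
    have hγc : ContinuousAt γ 0 :=
      ((FiberBundle.continuous_proj E (TangentSpace I)).continuousAt).comp hcd.continuousAt
    set ζ : Fin n → ℝ → E := fun i t => (e ⟨γ t, Z i (γ t)⟩).2 with hζdef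
    set w : ℝ → E := fun t => (e (c t)).2 with hwdef
    -- vertical lift at ⟨x, 0⟩ in coordinates
    have hvl : (show E × E from vertLift X (⟨x, 0⟩ : TangentBundle I M))
        = ((0 : E), (e ⟨x, X x⟩).2) := by
      have h := (vertAux x (0 : TangentSpace I x) (X x)).mfderiv
      have h0 : vertLift X (⟨x, 0⟩ : TangentBundle I M) = mfderiv 𝓘(ℝ) I.tangent
          (fun t : ℝ => (⟨x, (0 : TangentSpace I x) + t • X x⟩ : TangentBundle I M)) 0 (1:ℝ) :=
        rfl
      rw [h0, h]
      show (1:ℝ →L[ℝ] ℝ) (1:ℝ) • ((0:E), (trivializationAt E (TangentSpace I) x ⟨x, X x⟩).2)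
          = ((0:E), (trivializationAt E (TangentSpace I) x ⟨x, X x⟩).2)
      rw [ContinuousLinearMap.one_apply, one_smul]
    -- derivative of the fiber coordinate of the curve
    have hV := curve_hasDerivAt hcd
    have hw' : HasDerivAt w ((e ⟨x, X x⟩).2) 0 := by
      have h1 := ((ContinuousLinearMap.snd ℝ E E).hasFDerivAt).comp 0 hV.hasFDerivAt
      have h2 := h1.hasDerivAt
      have h3 : HasDerivAt (fun t => (extChartAt I.tangent (c 0) (c t)).2)
          ((show E × E from mfderiv 𝓘(ℝ) I.tangent c 0 (1:ℝ)).2) 0 := by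
          convert h2 using 1; rfl; exact (congrArg Prod.snd (one_smul ℝ (show E × E from mfderiv 𝓘(ℝ) I.tangent c 0 (1:ℝ)))).symm
      rw [hceq, hvl] at h3
      refine h3.congr_of_eventuallyEq (Filter.Eventually.of_forall fun t => ?_)
      show w t = (extChartAt I.tangent (c 0) (c t)).2
      rw [hc0, extChartAt_tangent_snd]
    have hw0 : w 0 = 0 := by
      show (e (c 0)).2 = 0
      rw [hc0]
      exact (e.linear ℝ hxe).map_zero
    -- continuity of the coordinate frame
    have hζc : ∀ i, ContinuousAt (ζ i) 0 := by
      intro i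
      have hsi : Continuous (fun y : M => (⟨y, Z i y⟩ : TangentBundle I M)) := (hZsm i).continuous
      have h1 : ContinuousAt (fun t => (⟨γ t, Z i (γ t)⟩ : TangentBundle I M)) 0 :=
        hsi.continuousAt.comp hγc
      have hmemsrc : (⟨x, Z i x⟩ : TangentBundle I M) ∈ e.source := e.mem_source.mpr hxe
      have h2 : ContinuousAt (⇑e) ((⟨γ 0, Z i (γ 0)⟩ : TangentBundle I M)) := by
        rw [hγ0]
        exact e.continuousOn.continuousAt (e.open_source.mem_nhds hmemsrc)
      have h3 : ContinuousAt (fun t => (e (⟨γ t, Z i (γ t)⟩ : TangentBundle I M))) 0 :=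
        ContinuousAt.comp (g := ⇑e) h2 h1
      exact h3.snd
    -- the frame at time 0 in coordinates
    have hζ0 : (fun i => ζ i 0) = fun i => e.continuousLinearEquivAt ℝ x hxe (Z i x) := by
      funext i
      show (e ⟨γ 0, Z i (γ 0)⟩).2 = _
      rw [hγ0]
      rfl
    have hind0 : LinearIndependent ℝ (fun i => ζ i 0) := by
      rw [hζ0]
      have := hxind.map' (e.continuousLinearEquivAt ℝ x hxe).toLinearEquiv.toLinearMap
        (LinearEquiv.ker _)
      simpa [Function.comp_def] using this
    -- the curve lies in the span of the coordinate frame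
    have hmem : ∀ᶠ t in nhds (0:ℝ), w t ∈ Submodule.span ℝ (Set.range fun i => ζ i t) := by
      have h1 : ∀ᶠ t in nhds (0:ℝ), γ t ∈ U := hγc (by rw [hγ0]; exact hU)
      have h2 : ∀ᶠ t in nhds (0:ℝ), γ t ∈ e.baseSet :=
        hγc (by rw [hγ0]; exact e.open_baseSet.mem_nhds hxe)
      filter_upwards [h1, h2] with t htU hte
      have hmem1 : (c t).2 ∈ Submodule.span ℝ (Set.range fun i => Z i (γ t)) := by
        rw [← (hZ (γ t) htU).2]; exact hcD t
      obtain ⟨a, ha⟩ := (Submodule.mem_span_range_iff_exists_fun ℝ).mp hmem1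
      rw [Submodule.mem_span_range_iff_exists_fun]
      refine ⟨a, ?_⟩
      have hlin := e.linear ℝ hte
      show ∑ i, a i • ζ i t = (e (c t)).2
      have hct : (e (c t)).2 = (e ⟨γ t, (c t).2⟩).2 := rfl
      rw [hct, ← ha]
      calc ∑ i, a i • ζ i t
          = ∑ i, a i • (IsLinearMap.mk' _ hlin) (Z i (γ t)) := rfl
        _ = (IsLinearMap.mk' _ hlin) (∑ i, a i • Z i (γ t)) := by
            rw [map_sum]
            exact Finset.sum_congr rfl fun i _ => by rw [map_smul]
        _ = (e ⟨γ t, ∑ i, a i • Z i (γ t)⟩).2 := rfl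
    -- apply the key analytic lemma
    have hkey := span_limit hζc hind0 hw' hw0 hmem
    rw [hζ0] at hkey
    set φ := e.continuousLinearEquivAt ℝ x hxe with hφ
    have h5 : Submodule.span ℝ (Set.range fun i => φ (Z i x))
        = Submodule.map φ.toLinearEquiv.toLinearMap
            (Submodule.span ℝ (Set.range fun i => Z i x)) := by
      rw [Submodule.map_span, ← Set.range_comp]
      rfl
    have h6 : (e ⟨x, X x⟩).2 = φ (X x) := rfl
    rw [h5, h6] at hkey
    obtain ⟨y, hy, hyx⟩ := Submodule.mem_map.mp hkey
    have hyX : y = X x := φ.injective hyx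
    rw [hxspan, ← hyX]
    exact hy
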